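/- Let A, B, C ∈ ℝ² be pairwise distinct and ωA, ωB, ωC ∈ ℝ. Then the derivative at t = 0 of t ↦ I₂(ωB, ωC, C − (B + t·K₂(A, ωA, B))) equals (ωA·ωB·ωC/(8π²)) · cross2(B − A, B − C) / (‖B − A‖² · ‖B − C‖²). That is, advecting B by the velocity induced by the vortex at A changes the 2d interaction energy between B and C at this explicit rate. -/

import Mathlib

open MeasureTheory Real

noncomputable section

/-- The scalar cross product on `EuclideanSpace ℝ (Fin 2)`: `cross2 u v = u₁v₂ − u₂v₁`. -/
def cross2 (u v : EuclideanSpace ℝ (Fin 2)) : ℝ := u 0 * v 1 - u 1 * v 0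

/-- The rotation by 90 degrees: `v^⊥ = (−v₂, v₁)`. -/
def perp (v : EuclideanSpace ℝ (Fin 2)) : EuclideanSpace ℝ (Fin 2) :=
  (WithLp.equiv 2 (Fin 2 → ℝ)).symm ![-(v 1), v 0]

/-- The 2d Biot-Savart velocity induced at `x` by a point vortex at `p` with scalar
vorticity `w`: `K₂(p, w, x) = (w/(2π))·(x − p)^⊥/‖x − p‖²`. -/
def K2 (p : EuclideanSpace ℝ (Fin 2)) (w : ℝ) (x : EuclideanSpace ℝ (Fin 2)) :
    EuclideanSpace ℝ (Fin 2) :=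
  (w / (2 * π)) • ((‖x - p‖ ^ 2)⁻¹ • perp (x - p))

/-- The 2d interaction energy of scalar vorticities `wb, wc` at displacement `d`:
`I₂(wb, wc, d) = (1/(4π))·wb·wc·log ‖d‖`. -/
def I2 (wb wc : ℝ) (d : EuclideanSpace ℝ (Fin 2)) : ℝ :=
  (1 / (4 * π)) * wb * wc * Real.log ‖d‖

/-- The rate of change of the 2d interaction energy between `B` and `C` as `B` is
advected by the velocity induced by the point vortex at `A`. -/
theorem deriv_interaction_energy_advected (A B C : EuclideanSpace ℝ (Fin 2))
    (ωA ωB ωC : ℝ) (hAB : A ≠ B) (hBC : B ≠ C) (hAC : A ≠ C) :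
    deriv (fun t : ℝ => I2 ωB ωC (C - (B + t • K2 A ωA B))) 0 =
      (ωA * ωB * ωC / (8 * π ^ 2)) * cross2 (B - A) (B - C) /
        (‖B - A‖ ^ 2 * ‖B - C‖ ^ 2) := by
  set V := K2 A ωA B with hV
  set d : EuclideanSpace ℝ (Fin 2) := C - B with hd
  have hd0 : d ≠ 0 := sub_ne_zero.mpr (Ne.symm hBC)
  have hdn : ‖d‖ ≠ 0 := norm_ne_zero_iff.mpr hd0
  have hinn : (inner ℝ d d : ℝ) ≠ 0 := by
    rw [real_inner_self_eq_norm_sq]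
    exact pow_ne_zero 2 hdn
  have h1 : HasDerivAt (fun t : ℝ => d - t • V) (-V) 0 := by
    simpa using ((hasDerivAt_id (0:ℝ)).smul_const V).const_sub d
  have h2 : HasDerivAt (fun t : ℝ => (inner ℝ (d - t • V) (d - t • V) : ℝ))
      (inner ℝ d (-V) + inner ℝ (-V) d) 0 := by
    have := h1.inner ℝ h1
    simpa using this
  have h3 : HasDerivAt (fun t : ℝ => Real.log (inner ℝ (d - t • V) (d - t • V) : ℝ))
      ((inner ℝ d (-V) + inner ℝ (-V) d) / (inner ℝ d d : ℝ)) 0 := by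
    have := h2.log (by simpa using hinn)
    simpa using this
  have h4 : HasDerivAt (fun t : ℝ => I2 ωB ωC (C - (B + t • V)))
      ((1 / (4 * π)) * ωB * ωC *
        (((inner ℝ d (-V) + inner ℝ (-V) d) / (inner ℝ d d : ℝ)) / 2)) 0 := by
    have heq : (fun t : ℝ => I2 ωB ωC (C - (B + t • V)))
        = fun t : ℝ => (1 / (4 * π)) * ωB * ωC *
            (Real.log (inner ℝ (d - t • V) (d - t • V) : ℝ) / 2) := by
      funext t
      have : C - (B + t • V) = d - t • V := by
        rw [hd]; abel
      rw [I2, this, real_inner_self_eq_norm_sq, Real.log_pow]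
      push_cast
      ring
    rw [heq]
    exact ((h3.div_const 2).const_mul _)
  rw [h4.deriv]
  -- compute inner d V
  have hperp : (inner ℝ d (perp (B - A)) : ℝ) = - cross2 (B - A) (B - C) := by
    simp [PiLp.inner_apply, Fin.sum_univ_two, perp, cross2, hd, WithLp.equiv_symm_apply]
    ring
  have hdV : (inner ℝ d V : ℝ)
      = (ωA / (2 * π)) * (‖B - A‖ ^ 2)⁻¹ * (- cross2 (B - A) (B - C)) := by
    rw [hV, K2, real_inner_smul_right, real_inner_smul_right, hperp]
    ring
  have hsymm : (inner ℝ (-V) d : ℝ) = - inner ℝ d V := by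
    rw [inner_neg_left, real_inner_comm]
  have hdV' : (inner ℝ d (-V) : ℝ) = - inner ℝ d V := by rw [inner_neg_right]
  rw [hsymm, hdV', hdV, real_inner_self_eq_norm_sq]
  have hdnorm : ‖d‖ = ‖B - C‖ := by rw [hd, norm_sub_rev]
  rw [hdnorm]
  have hπ : π ≠ 0 := Real.pi_ne_zero
  have hBA : ‖B - A‖ ≠ 0 := norm_ne_zero_iff.mpr (sub_ne_zero.mpr (Ne.symm hAB))
  have hBCn : ‖B - C‖ ≠ 0 := norm_ne_zero_iff.mpr (sub_ne_zero.mpr hBC)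
  field_simp
  ring
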